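/- Let φ : 𝕊ⁿ → ℝ≥0 be a function, α ∈ (0,1), C₀ > 0, and suppose |φ(t) − φ(𝟙)| ≤ C₀ d(t,𝟙)^α for all t ∈ 𝕊ⁿ, where 𝟙 = (1,0,…,0) and d(u,v) = |1 − ⟨u,v⟩|. If moreover φ(𝟙) > 1 and B₀ := sup over ξ ∈ 𝕊ⁿ of ∫_𝕋 |log φ(ξλ)| dλ < ∞, then log φ(𝟙) ≤ log 2 + |log C₀| + B₀/(2π) + κ, where κ = (α/2π) ∫₀^{2π} |log |1 − e^{iθ}|| dθ. -/

import Mathlib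

section Aux
open Real MeasureTheory intervalIntegral Set

lemma aux_log_int {c : ℝ} (hc : 0 ≤ c) :
    IntervalIntegrable Real.log volume 0 c := by
  rw [intervalIntegrable_iff_integrableOn_Ioc_of_le hc]
  have hg : IntegrableOn (fun x : ℝ => 2 * x ^ (-(1/2) : ℝ) + x) (Ioc 0 c) volume := by
    rw [← intervalIntegrable_iff_integrableOn_Ioc_of_le hc]
    exact ((intervalIntegrable_rpow' (by norm_num)).const_mul 2).add intervalIntegrable_id
  refine hg.integrable.mono Real.measurable_log.aestronglyMeasurable.restrict ?_
  rw [ae_restrict_iff' measurableSet_Ioc]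
  filter_upwards with x hx
  have hx0 : (0:ℝ) < x := hx.1
  have hrp : (0:ℝ) < x ^ (-(1/2):ℝ) := Real.rpow_pos_of_pos hx0 _
  have hbound : |Real.log x| ≤ 2 * x ^ (-(1/2) : ℝ) + x := by
    rcases le_or_gt x 1 with h1 | h1
    · have hlognp : Real.log x ≤ 0 := Real.log_nonpos hx0.le h1
      rw [abs_of_nonpos hlognp]
      have hs : (0:ℝ) < x ^ ((1/2):ℝ) := Real.rpow_pos_of_pos hx0 _
      have h2 : Real.log ((x ^ ((1/2):ℝ))⁻¹) ≤ (x ^ ((1/2):ℝ))⁻¹ - 1 :=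
        Real.log_le_sub_one_of_pos (by positivity)
      rw [Real.log_inv, Real.log_rpow hx0] at h2
      have hinv : (x ^ ((1/2):ℝ))⁻¹ = x ^ (-(1/2):ℝ) := by
        rw [← Real.rpow_neg hx0.le]
      rw [hinv] at h2
      nlinarith
    · rw [abs_of_nonneg (Real.log_nonneg h1.le)]
      have := Real.log_le_sub_one_of_pos hx0
      nlinarith
  calc ‖Real.log x‖ = |Real.log x| := rfl
    _ ≤ 2 * x ^ (-(1/2) : ℝ) + x := hbound
    _ ≤ ‖2 * x ^ (-(1/2) : ℝ) + x‖ := le_abs_self _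

lemma aux_r_eq (θ : ℝ) :
    ‖1 - Complex.exp (θ * Complex.I)‖ = 2 * |Real.sin (θ/2)| := by
  have h1 : Complex.exp (((θ/2 : ℝ) : ℂ) * Complex.I) *
      Complex.exp (-(((θ/2 : ℝ) : ℂ) * Complex.I)) = 1 := by
    rw [← Complex.exp_add, add_neg_cancel, Complex.exp_zero]
  have h2 : Complex.exp (((θ/2 : ℝ) : ℂ) * Complex.I) *
      Complex.exp (((θ/2 : ℝ) : ℂ) * Complex.I) = Complex.exp ((θ : ℂ) * Complex.I) := by
    rw [← Complex.exp_add]; congr 1; push_cast; ring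
  have key : (1:ℂ) - Complex.exp ((θ:ℂ) * Complex.I) =
      Complex.exp (((θ/2 : ℝ) : ℂ) * Complex.I) *
        (-2 * Complex.I * Complex.sin ((θ/2 : ℝ) : ℂ)) := by
    rw [Complex.sin]
    rw [← h1, ← h2]
    have hI : (Complex.I : ℂ) * Complex.I = -1 := Complex.I_mul_I
    ring_nf
    rw [Complex.I_sq]
    ring
  rw [key, norm_mul, Complex.norm_exp_ofReal_mul_I, one_mul, norm_mul, norm_mul]
  rw [← Complex.ofReal_sin, Complex.norm_real]
  simp

lemma aux_r_lb {θ : ℝ} (h0 : 0 ≤ θ) (h2 : θ ≤ 2 * π) :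
    min θ (2 * π - θ) / π ≤ ‖1 - Complex.exp (θ * Complex.I)‖ := by
  have hπ : 0 < π := pi_pos
  have hx0 : 0 ≤ θ / 2 := by linarith
  have hxπ : θ / 2 ≤ π := by linarith
  have hsin : |Real.sin (θ/2)| = Real.sin (θ/2) :=
    abs_of_nonneg (Real.sin_nonneg_of_nonneg_of_le_pi hx0 hxπ)
  rw [aux_r_eq, hsin]
  have hsnn : 0 ≤ Real.sin (θ/2) := Real.sin_nonneg_of_nonneg_of_le_pi hx0 hxπ
  rcases le_or_gt (θ/2) (π/2) with h | h
  · have h1 := Real.mul_le_sin hx0 h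
    rw [show 2 / π * (θ/2) = θ / π by ring] at h1
    have h2 := (div_le_iff₀ hπ).1 h1
    have hmin : min θ (2*π - θ) ≤ θ := min_le_left _ _
    rw [div_le_iff₀ hπ]
    nlinarith
  · have hs : Real.sin (θ/2) = Real.sin (π - θ/2) := (Real.sin_pi_sub _).symm
    have h1 := Real.mul_le_sin (x := π - θ/2) (by linarith) (by linarith)
    rw [show 2 / π * (π - θ/2) = (2*π - θ) / π by ring] at h1
    rw [← hs] at h1
    have h2 := (div_le_iff₀ hπ).1 h1
    have hmin : min θ (2*π - θ) ≤ 2*π - θ := min_le_right _ _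
    rw [div_le_iff₀ hπ]
    nlinarith

lemma aux_int3 : IntervalIntegrable
    (fun θ : ℝ => |Real.log (‖1 - Complex.exp (θ * Complex.I)‖)|)
    volume 0 (2 * π) := by
  have hπ : 0 < π := pi_pos
  have h2π : (0:ℝ) ≤ 2 * π := by positivity
  have hlog1 : IntervalIntegrable (fun x => |Real.log x|) volume 0 (2*π) :=
    (aux_log_int h2π).abs
  have hlog2 : IntervalIntegrable (fun x => |Real.log (2*π - x)|) volume 0 (2*π) := by
    have := (hlog1.comp_sub_left (2*π)).symm
    simpa using this
  have hg : IntervalIntegrable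
      (fun θ => (2 * Real.log 2 + Real.log π) + (|Real.log θ| + |Real.log (2*π - θ)|))
      volume 0 (2*π) := intervalIntegrable_const.add (hlog1.add hlog2)
  rw [intervalIntegrable_iff_integrableOn_Ioc_of_le h2π] at hg ⊢
  have hcont : Continuous (fun θ : ℝ => ‖1 - Complex.exp (θ * Complex.I)‖) :=
    continuous_norm.comp
      (continuous_const.sub (Complex.continuous_exp.comp
        (Complex.continuous_ofReal.mul continuous_const)))
  have hmeas : AEStronglyMeasurable
      (fun θ : ℝ => |Real.log (‖1 - Complex.exp (θ * Complex.I)‖)|)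
      (volume.restrict (Ioc 0 (2*π))) := by
    apply Measurable.aestronglyMeasurable
    exact (Real.measurable_log.comp hcont.measurable).abs
  refine hg.integrable.mono hmeas ?_
  rw [ae_restrict_iff' measurableSet_Ioc]
  filter_upwards with θ hθ
  set r := ‖1 - Complex.exp (θ * Complex.I)‖ with hr
  have hrub : r ≤ 2 := by
    rw [hr, aux_r_eq]
    have h1 : |Real.sin (θ/2)| ≤ 1 := abs_le.2 ⟨Real.neg_one_le_sin _, Real.sin_le_one _⟩
    linarith
  have hgnn : 0 ≤ (2 * Real.log 2 + Real.log π) + (|Real.log θ| + |Real.log (2*π - θ)|) := by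
    have : (0:ℝ) ≤ Real.log 2 := Real.log_nonneg (by norm_num)
    have : (0:ℝ) ≤ Real.log π := Real.log_nonneg (by linarith [Real.pi_gt_three])
    positivity
  have hbound : |Real.log r| ≤
      (2 * Real.log 2 + Real.log π) + (|Real.log θ| + |Real.log (2*π - θ)|) := by
    have hrnn : 0 ≤ r := by rw [hr]; exact norm_nonneg _
    rcases eq_or_lt_of_le hrnn with h0 | h0
    · rw [← h0]; simpa [Real.log_zero] using hgnn
    · -- r > 0
      have hθ2 : θ < 2 * π := by
        rcases eq_or_lt_of_le hθ.2 with he | hl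
        · exfalso
          have : r = 0 := by
            rw [hr, aux_r_eq, he]
            norm_num [Real.sin_pi]
          rw [this] at h0; exact lt_irrefl _ h0
        · exact hl
      have hm : 0 < min θ (2*π - θ) := lt_min hθ.1 (by linarith)
      have hlb : min θ (2*π - θ) / π ≤ r := by
        have := aux_r_lb hθ.1.le hθ.2
        rw [← hr] at this
        exact this
      have hlogr_ub : Real.log r ≤ Real.log 2 := Real.log_le_log h0 hrub
      have hlog2nn : (0:ℝ) ≤ Real.log 2 := Real.log_nonneg (by norm_num)
      have habs : |Real.log r| ≤ 2 * Real.log 2 - Real.log r :=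
        abs_le.2 ⟨by linarith, by linarith⟩
      have hlogr_lb : Real.log (min θ (2*π - θ)) - Real.log π ≤ Real.log r := by
        rw [← Real.log_div hm.ne' hπ.ne']
        exact Real.log_le_log (by positivity) hlb
      have hlogm : -(|Real.log θ| + |Real.log (2*π - θ)|) ≤ Real.log (min θ (2*π - θ)) := by
        rcases min_cases θ (2*π - θ) with ⟨he, _⟩ | ⟨he, _⟩ <;> rw [he] <;>
          [linarith [neg_abs_le (Real.log θ), abs_nonneg (Real.log (2*π - θ))];
           linarith [neg_abs_le (Real.log (2*π - θ)), abs_nonneg (Real.log θ)]]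
      linarith
  calc ‖|Real.log r|‖ = |Real.log r| := by rw [Real.norm_eq_abs, abs_abs]
    _ ≤ (2 * Real.log 2 + Real.log π) + (|Real.log θ| + |Real.log (2*π - θ)|) := hbound
    _ ≤ ‖(2 * Real.log 2 + Real.log π) + (|Real.log θ| + |Real.log (2*π - θ)|)‖ := le_abs_self _

end Aux


open scoped InnerProductSpace
open Real

theorem normalization_step (n : ℕ) (hn : 2 ≤ n) (α C₀ B₀ : ℝ)
    (hα : α ∈ Set.Ioo (0:ℝ) 1) (hC₀ : 0 < C₀)
    (φ : EuclideanSpace ℂ (Fin n) → ℝ) (hφ : ∀ t, 0 ≤ φ t)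
    (one : EuclideanSpace ℂ (Fin n))
    (hone : one = EuclideanSpace.single (⟨0, by omega⟩ : Fin n) 1)
    (d : EuclideanSpace ℂ (Fin n) → EuclideanSpace ℂ (Fin n) → ℝ)
    (hd : ∀ u v, d u v = ‖1 - ⟪u, v⟫_ℂ‖)
    (hHolder : ∀ t, ‖t‖ = 1 → |φ t - φ one| ≤ C₀ * d t one ^ α)
    (hφ1 : 1 < φ one)
    (hsliceInt : ∀ ξ : EuclideanSpace ℂ (Fin n), ‖ξ‖ = 1 →
      IntervalIntegrable
        (fun θ => |Real.log (φ (Complex.exp (θ * Complex.I) • ξ))|)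
        MeasureTheory.volume 0 (2 * π))
    (hslice : ∀ ξ : EuclideanSpace ℂ (Fin n), ‖ξ‖ = 1 →
      (∫ θ in (0:ℝ)..(2 * π),
        |Real.log (φ (Complex.exp (θ * Complex.I) • ξ))|) ≤ B₀)
    (κ : ℝ)
    (hκ : κ = (α / (2 * π)) *
      ∫ θ in (0:ℝ)..(2 * π),
        |Real.log (‖1 - Complex.exp (θ * Complex.I)‖)|) :
    Real.log (φ one) ≤ Real.log 2 + |Real.log C₀| + B₀ / (2 * π) + κ := by
  have hπ : 0 < π := pi_pos
  have hone_norm : ‖one‖ = 1 := by rw [hone, EuclideanSpace.norm_single]; norm_num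
  have ht_norm : ∀ θ : ℝ, ‖Complex.exp (θ * Complex.I) • one‖ = 1 := by
    intro θ
    rw [norm_smul, hone_norm, Complex.norm_exp_ofReal_mul_I, one_mul]
  have hd_eq : ∀ θ : ℝ, d (Complex.exp (θ * Complex.I) • one) one
      = ‖1 - Complex.exp (θ * Complex.I)‖ := by
    intro θ
    rw [hd, inner_smul_left]
    have hone1 : ⟪one, one⟫_ℂ = 1 := by
      rw [hone, EuclideanSpace.inner_single_left]
      simp [EuclideanSpace.single_apply]
    rw [hone1, mul_one, ← Complex.norm_conj]
    congr 1
    simp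
  have hφone_pos : 0 < φ one := lt_trans one_pos hφ1
  have hlogφ_pos : 0 < Real.log (φ one) := Real.log_pos hφ1
  have hlog2 : (0:ℝ) ≤ Real.log 2 := Real.log_nonneg (by norm_num)
  -- pointwise bound
  have hptwise : ∀ θ ∈ Set.Icc (0:ℝ) (2*π),
      Real.log (φ one) ≤ (Real.log 2 + |Real.log C₀|)
        + |Real.log (φ (Complex.exp (θ * Complex.I) • one))|
        + α * |Real.log (‖1 - Complex.exp (θ * Complex.I)‖)| := by
    intro θ _
    set t := Complex.exp (θ * Complex.I) • one with ht
    set r := ‖1 - Complex.exp (θ * Complex.I)‖ with hr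
    have hH := hHolder t (ht_norm θ)
    rw [hd_eq θ, ← hr] at hH
    have hαr : 0 ≤ α * |Real.log r| := mul_nonneg hα.1.le (abs_nonneg _)
    by_cases hr0 : r = 0
    · have hzero : C₀ * r ^ α = 0 := by
        rw [hr0, Real.zero_rpow (ne_of_gt hα.1), mul_zero]
      have hEq : φ t = φ one := by
        rw [hzero] at hH
        have h0 : |φ t - φ one| = 0 := le_antisymm hH (abs_nonneg _)
        have := sub_eq_zero.1 (abs_eq_zero.1 h0)
        linarith
      have : |Real.log (φ t)| = Real.log (φ one) := by
        rw [hEq, abs_of_pos hlogφ_pos]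
      rw [this]
      have : (0:ℝ) ≤ |Real.log C₀| := abs_nonneg _
      linarith
    · have hrpos : 0 < r := lt_of_le_of_ne (norm_nonneg _) (Ne.symm hr0)
      have hbpos : 0 < C₀ * r ^ α := by positivity
      have hub : φ one ≤ φ t + C₀ * r ^ α := by
        have := (abs_le.1 hH).1
        linarith
      have hmaxpos : 0 < max (φ t) (C₀ * r ^ α) := lt_max_of_lt_right hbpos
      have h2m : φ one ≤ 2 * max (φ t) (C₀ * r ^ α) := by
        have h1 := le_max_left (φ t) (C₀ * r ^ α)
        have h2 := le_max_right (φ t) (C₀ * r ^ α)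
        linarith
      have hstep1 : Real.log (φ one) ≤ Real.log 2 + Real.log (max (φ t) (C₀ * r ^ α)) := by
        rw [← Real.log_mul two_ne_zero hmaxpos.ne']
        exact Real.log_le_log hφone_pos h2m
      have hstep2 : Real.log (max (φ t) (C₀ * r ^ α))
          ≤ |Real.log (φ t)| + |Real.log (C₀ * r ^ α)| := by
        rcases max_cases (φ t) (C₀ * r ^ α) with ⟨he, _⟩ | ⟨he, _⟩ <;> rw [he] <;>
          [linarith [le_abs_self (Real.log (φ t)), abs_nonneg (Real.log (C₀ * r ^ α))];
           linarith [le_abs_self (Real.log (C₀ * r ^ α)), abs_nonneg (Real.log (φ t))]]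
      have hstep3 : |Real.log (C₀ * r ^ α)| ≤ |Real.log C₀| + α * |Real.log r| := by
        rw [Real.log_mul hC₀.ne' (by positivity), Real.log_rpow hrpos]
        calc |Real.log C₀ + α * Real.log r|
            ≤ |Real.log C₀| + |α * Real.log r| := abs_add_le _ _
          _ = |Real.log C₀| + α * |Real.log r| := by rw [abs_mul, abs_of_pos hα.1]
      linarith
  -- integrate
  have h2πnn : (0:ℝ) ≤ 2 * π := by positivity
  have hInt2 := hsliceInt one hone_norm
  have hInt3 := aux_int3
  have hIntc : IntervalIntegrable (fun _ : ℝ => Real.log 2 + |Real.log C₀|)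
      MeasureTheory.volume 0 (2*π) := intervalIntegrable_const
  have hIntg : IntervalIntegrable (fun θ : ℝ => (Real.log 2 + |Real.log C₀|)
        + |Real.log (φ (Complex.exp (θ * Complex.I) • one))|
        + α * |Real.log (‖1 - Complex.exp (θ * Complex.I)‖)|)
      MeasureTheory.volume 0 (2*π) :=
    (hIntc.add hInt2).add (hInt3.const_mul α)
  have hmono := intervalIntegral.integral_mono_on h2πnn intervalIntegrable_const hIntg hptwise
  rw [intervalIntegral.integral_add (hIntc.add hInt2) (hInt3.const_mul α),
      intervalIntegral.integral_add hIntc hInt2,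
      intervalIntegral.integral_const, intervalIntegral.integral_const,
      intervalIntegral.integral_const_mul] at hmono
  simp only [smul_eq_mul, sub_zero] at hmono
  set I2 := ∫ θ in (0:ℝ)..(2*π), |Real.log (φ (Complex.exp (θ * Complex.I) • one))| with hI2
  set I3 := ∫ θ in (0:ℝ)..(2*π),
      |Real.log (‖1 - Complex.exp (θ * Complex.I)‖)| with hI3
  have hI2B : I2 ≤ B₀ := hslice one hone_norm
  have hκ' : α * I3 = 2 * π * κ := by
    rw [hκ]
    field_simp
  have h2πpos : (0:ℝ) < 2 * π := by positivity
  refine le_of_mul_le_mul_left ?_ h2πpos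
  have hexp : (2*π) * (Real.log 2 + |Real.log C₀| + B₀ / (2*π) + κ)
      = (2*π) * (Real.log 2 + |Real.log C₀|) + B₀ + 2 * π * κ := by
    field_simp
  rw [hexp]
  linarith
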